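/- Let u'_i > 0, v_i ≥ 0 for i = 1..N and s > 0. Let z = (z_i) maximize ∑_i log(u'_i + v_i z_i) subject to z_i ≥ 0 and ∑_i z_i ≤ s. Then ∑_i [log(u'_i + v_i z_i) − log u'_i] ≥ s · max_i v_i/(u'_i + v_i z_i). -/

import Mathlib

open Finset

private lemma log_gain_lb {x y : ℝ} (hx : 0 < x) (hy : 0 ≤ y) :
    y / (x + y) ≤ Real.log (x + y) - Real.log x := by
  have hxy : 0 < x + y := by linarith
  have h := Real.log_le_sub_one_of_pos (show (0:ℝ) < x / (x + y) by positivity)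
  rw [Real.log_div (ne_of_gt hx) (ne_of_gt hxy)] at h
  have he : x / (x + y) - 1 = -(y / (x + y)) := by field_simp; ring
  linarith [he ▸ h]

private lemma log_gain_ub {x y : ℝ} (hx : 0 < x) (hy : 0 ≤ y) :
    Real.log (x + y) - Real.log x ≤ y / x := by
  have hxy : 0 < x + y := by linarith
  have h := Real.log_le_sub_one_of_pos (show (0:ℝ) < (x + y) / x by positivity)
  rw [Real.log_div (ne_of_gt hxy) (ne_of_gt hx)] at h
  have he : (x + y) / x - 1 = y / x := by field_simp; ring
  linarith [he ▸ h]

private lemma sum_sub_single {N : ℕ} (i : Fin N) (f g : Fin N → ℝ)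
    (h : ∀ k, k ≠ i → f k = g k) : ∑ k, f k - ∑ k, g k = f i - g i := by
  have h1 : ∑ k, (f k - g k) = f i - g i := by
    apply Finset.sum_eq_single_of_mem i (Finset.mem_univ i)
    intro b _ hb
    rw [h b hb]; ring
  rw [← h1, Finset.sum_sub_distrib]

private lemma sum_sub_pair {N : ℕ} (i j : Fin N) (hij : i ≠ j) (f g : Fin N → ℝ)
    (h : ∀ k, k ≠ i → k ≠ j → f k = g k) :
    ∑ k, f k - ∑ k, g k = (f i - g i) + (f j - g j) := by
  have h1 : ∑ k, (f k - g k) = (f i - g i) + ∑ k ∈ Finset.univ.erase i, (f k - g k) :=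
    (Finset.add_sum_erase _ _ (Finset.mem_univ i)).symm
  have h2 : ∑ k ∈ Finset.univ.erase i, (f k - g k) = f j - g j := by
    apply Finset.sum_eq_single_of_mem j (Finset.mem_erase.mpr ⟨hij.symm, Finset.mem_univ j⟩)
    intro b hb hbj
    rw [h b (Finset.mem_erase.mp hb).1 hbj]; ring
  rw [← Finset.sum_sub_distrib, h1, h2]

set_option maxHeartbeats 1000000 in
/-- The greedy single-item step: the gain of the log Nash welfare objective is
at least the supply times the maximum marginal rate. -/
theorem greedy_predicted_utility_increase
    (N : ℕ) (hN : 0 < N)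
    (u' : Fin N → ℝ) (v : Fin N → ℝ) (s : ℝ)
    (hu' : ∀ i, 0 < u' i) (hv : ∀ i, 0 ≤ v i) (hs : 0 < s)
    (hvpos : ∃ i, 0 < v i)
    (z : Fin N → ℝ)
    (hz_nonneg : ∀ i, 0 ≤ z i)
    (hz_supply : ∑ i, z i ≤ s)
    (hopt : ∀ w : Fin N → ℝ, (∀ i, 0 ≤ w i) → (∑ i, w i ≤ s) →
      (∑ i, Real.log (u' i + v i * w i)) ≤ ∑ i, Real.log (u' i + v i * z i)) :
    (∑ i, (Real.log (u' i + v i * z i) - Real.log (u' i))) ≥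
      s * (Finset.univ.sup' (Finset.univ_nonempty_iff.mpr (Fin.pos_iff_nonempty.mp hN))
        fun i => v i / (u' i + v i * z i)) := by
  have ha : ∀ i, 0 < u' i + v i * z i := fun i => by
    have := mul_nonneg (hv i) (hz_nonneg i); linarith [hu' i]
  set r : Fin N → ℝ := fun i => v i / (u' i + v i * z i) with hr
  -- Fact B : the supply is exhausted.
  have hsum : ∑ i, z i = s := by
    by_contra hne
    have hlt : ∑ i, z i < s := lt_of_le_of_ne hz_supply hne
    obtain ⟨j, hj⟩ := hvpos
    set δ : ℝ := s - ∑ i, z i with hδ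
    have hδpos : 0 < δ := by simp [hδ]; linarith
    set w : Fin N → ℝ := Function.update z j (z j + δ) with hw
    have hwnn : ∀ i, 0 ≤ w i := by
      intro k
      rcases eq_or_ne k j with h | h
      · subst h; simp [hw, Function.update_self]; linarith [hz_nonneg k]
      · simp [hw, Function.update_of_ne h]; exact hz_nonneg k
    have hwsum : ∑ i, w i ≤ s := by
      have h1 : ∑ i, w i - ∑ i, z i = w j - z j := by
        apply sum_sub_single
        intro k hk; simp [hw, Function.update_of_ne hk]
      have : w j = z j + δ := by simp [hw]
      rw [this] at h1
      linarith
    have hgain : ∑ i, Real.log (u' i + v i * z i) <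
        ∑ i, Real.log (u' i + v i * w i) := by
      have h1 : ∑ i, Real.log (u' i + v i * w i) - ∑ i, Real.log (u' i + v i * z i)
          = Real.log (u' j + v j * w j) - Real.log (u' j + v j * z j) := by
        apply sum_sub_single
        intro k hk; simp [hw, Function.update_of_ne hk]
      have hwj : w j = z j + δ := by simp [hw]
      have h2 : Real.log (u' j + v j * z j) < Real.log (u' j + v j * w j) := by
        apply Real.log_lt_log (ha j)
        rw [hwj]
        nlinarith
      linarith
    exact absurd (hopt w hwnn hwsum) (not_le.mpr hgain)
  -- Fact A : every index with positive allocation attains the max rate.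
  have hA : ∀ i j, 0 < z i → r j ≤ r i := by
    intro i j hzi
    by_contra hcon
    have hlt : r i < r j := not_le.mp hcon
    have hij : i ≠ j := fun h => by rw [h] at hlt; exact lt_irrefl _ hlt
    set b : ℝ := v i
    set d : ℝ := v j
    set A : ℝ := u' i + v i * z i with hA'
    set C : ℝ := u' j + v j * z j with hC'
    have hApos : 0 < A := ha i
    have hCpos : 0 < C := ha j
    have hbc : b * C < d * A := by
      have : b / A < d / C := hlt
      rw [div_lt_div_iff₀ hApos hCpos] at this
      linarith
    have hbnn : 0 ≤ b := hv i
    have hdnn : 0 ≤ d := hv j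
    set ε : ℝ := min (z i) ((d * A - b * C) / (2 * b * d + 1)) with hε
    have hεpos : 0 < ε := by
      apply lt_min hzi
      apply div_pos (by linarith) (by nlinarith)
    have hεzi : ε ≤ z i := min_le_left _ _
    have hε2 : ε * (2 * b * d + 1) ≤ d * A - b * C := by
      have h := min_le_right (z i) ((d * A - b * C) / (2 * b * d + 1))
      rw [← hε] at h
      rw [← le_div_iff₀ (by nlinarith : (0:ℝ) < 2 * b * d + 1)]
      exact h
    have key1 : 2 * b * d * ε < d * A - b * C := by nlinarith
    have key2 : b * ε < A := by
      have h1 : b * ε ≤ b * z i := by nlinarith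
      have := hu' i
      simp only [hA']
      nlinarith
    set w : Fin N → ℝ := fun k => if k = i then z i - ε else if k = j then z j + ε else z k
      with hw
    have hwi : w i = z i - ε := by simp [hw]
    have hwj : w j = z j + ε := by simp [hw, hij.symm, if_neg (Ne.symm hij)]
    have hwnn : ∀ k, 0 ≤ w k := by
      intro k
      simp only [hw]
      split_ifs with h1 h2
      · subst h1; linarith
      · subst h2; linarith [hz_nonneg k]
      · exact hz_nonneg k
    have hwk : ∀ k, k ≠ i → k ≠ j → w k = z k := by
      intro k h1 h2; simp [hw, h1, h2]
    have hwsum : ∑ k, w k ≤ s := by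
      have h1 : ∑ k, w k - ∑ k, z k = (w i - z i) + (w j - z j) :=
        sum_sub_pair i j hij _ _ hwk
      rw [hwi, hwj] at h1
      have : ∑ k, w k = ∑ k, z k := by linarith
      rw [this]
      exact hz_supply
    have hgain : ∑ k, Real.log (u' k + v k * z k) <
        ∑ k, Real.log (u' k + v k * w k) := by
      have h1 : ∑ k, Real.log (u' k + v k * w k) - ∑ k, Real.log (u' k + v k * z k)
          = (Real.log (u' i + v i * w i) - Real.log (u' i + v i * z i))
            + (Real.log (u' j + v j * w j) - Real.log (u' j + v j * z j)) := by
        apply sum_sub_pair i j hij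
        intro k h1 h2; rw [hwk k h1 h2]
      have hAe : u' i + v i * w i = (A - b * ε) := by rw [hwi]; simp only [hA']; ring
      have hCe : u' j + v j * w j = (C + d * ε) := by rw [hwj]; simp only [hC']; ring
      have ht1 : Real.log A - Real.log (A - b * ε) ≤ b * ε / (A - b * ε) := by
        have := log_gain_ub (x := A - b * ε) (y := b * ε) (by linarith)
          (by positivity)
        have he : A - b * ε + b * ε = A := by ring
        rw [he] at this
        linarith
      have ht2 : d * ε / (C + d * ε) ≤ Real.log (C + d * ε) - Real.log C :=
        log_gain_lb hCpos (by positivity)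
      have hpos : 0 < d * ε / (C + d * ε) - b * ε / (A - b * ε) := by
        rw [sub_pos, div_lt_div_iff₀ (by linarith) (by positivity)]
        nlinarith
      rw [hAe, hCe, ← hA', ← hC'] at h1
      linarith
    exact absurd (hopt w hwnn hwsum) (not_le.mpr hgain)
  -- Assemble.
  obtain ⟨j0, _, hj0⟩ := Finset.exists_mem_eq_sup' (Finset.univ_nonempty_iff.mpr
    (Fin.pos_iff_nonempty.mp hN)) r
  set M : ℝ := Finset.univ.sup' (Finset.univ_nonempty_iff.mpr (Fin.pos_iff_nonempty.mp hN)) r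
    with hM
  have key : ∀ i, z i * M ≤ Real.log (u' i + v i * z i) - Real.log (u' i) := by
    intro i
    have hgain : z i * r i ≤ Real.log (u' i + v i * z i) - Real.log (u' i) := by
      have := log_gain_lb (hu' i) (mul_nonneg (hv i) (hz_nonneg i))
      have he : z i * r i = v i * z i / (u' i + v i * z i) := by
        simp only [hr]
        field_simp
      rw [he]
      exact this
    rcases eq_or_lt_of_le (hz_nonneg i) with h | h
    · have hge : 0 ≤ Real.log (u' i + v i * z i) - Real.log (u' i) := by
        have h2 : 0 ≤ z i * r i := by
          rw [← h]; simp
        linarith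
      rw [← h]; simpa using hge
    · have hri : M ≤ r i := by rw [hj0]; exact hA i j0 h
      have : z i * M ≤ z i * r i := by nlinarith
      linarith
  calc s * M = (∑ i, z i) * M := by rw [hsum]
    _ = ∑ i, z i * M := by rw [Finset.sum_mul]
    _ ≤ ∑ i, (Real.log (u' i + v i * z i) - Real.log (u' i)) :=
        Finset.sum_le_sum (fun i _ => key i)
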